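/- Let σ be a lock-well-formed execution and S a finite set of read/write events of σ. Then for every event e of σ, the sum over all threads t ∈ Threads(σ) of Csmp(e)(t) is at most |S|. -/

import Mathlib

open scoped Classical

noncomputable section

/-- An operation: read/write of a memory location, or acquire/release of a lock. -/
inductive Op : Type where
  | read (x : ℕ)
  | write (x : ℕ)
  | acq (l : ℕ)
  | rel (l : ℕ)
  deriving DecidableEq

/-- An execution: a finite sequence of (pairwise-distinct) events, each with a
thread identifier and an operation.  Events are identified with their index
in the sequence, so trace order is the order on `Fin n`. -/
structure Execution : Type where
  n : ℕ
  thread : Fin n → ℕ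
  op : Fin n → Op

/-- `o` is a release operation. -/
def Op.isRel (o : Op) : Prop := ∃ l, o = Op.rel l

/-- `o` is a read or write operation. -/
def Op.isAccess (o : Op) : Prop := ∃ x, o = Op.read x ∨ o = Op.write x

/-- `o` accesses memory location `x`. -/
def Op.accesses (o : Op) (x : ℕ) : Prop := o = Op.read x ∨ o = Op.write x

namespace Execution

/-- Event `e` operates on lock `l`. -/
def touches (σ : Execution) (l : ℕ) (e : Fin σ.n) : Prop :=
  σ.op e = Op.acq l ∨ σ.op e = Op.rel l

/-- Lock-well-formedness: for every lock `l`, the subsequence of events on `l`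
alternates acquires and releases beginning with an acquire (an event on `l` is
an acquire iff an even number of events on `l` precede it), and each release of
`l` is performed by the same thread as the immediately preceding acquire of `l`. -/
def LockWellFormed (σ : Execution) : Prop :=
  ∀ l : ℕ, ∀ e : Fin σ.n, σ.touches l e →
    ((σ.op e = Op.acq l ↔
        Even ((Finset.univ.filter (fun f => f < e ∧ σ.touches l f)).card)) ∧
     (σ.op e = Op.rel l →
        ∃ f : Fin σ.n, f < e ∧ σ.op f = Op.acq l ∧ σ.thread f = σ.thread e ∧
          ∀ g : Fin σ.n, f < g → g < e → ¬ σ.touches l g))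

/-- Nonstrict thread order `e1 ≤tho e2`. -/
def tho (σ : Execution) (e1 e2 : Fin σ.n) : Prop :=
  e1 ≤ e2 ∧ σ.thread e1 = σ.thread e2

/-- Strict thread order `e1 <tho e2`. -/
def sTho (σ : Execution) (e1 e2 : Fin σ.n) : Prop :=
  e1 < e2 ∧ σ.thread e1 = σ.thread e2

/-- One step of happens-before: thread order, or a release–acquire edge. -/
def hbStep (σ : Execution) (e1 e2 : Fin σ.n) : Prop :=
  σ.tho e1 e2 ∨ (e1 < e2 ∧ ∃ l, σ.op e1 = Op.rel l ∧ σ.op e2 = Op.acq l)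

/-- Happens-before: reflexive-transitive closure of thread order together
with release–acquire edges. -/
def hb (σ : Execution) : Fin σ.n → Fin σ.n → Prop :=
  Relation.ReflTransGen σ.hbStep

/-- The (finite) set of threads of the events of `σ`. -/
def threads (σ : Execution) : Finset ℕ :=
  Finset.univ.image σ.thread

/-- Local time `Lft(e)`: 1 plus the number of release events thread-order
before `e`. -/
def Lft (σ : Execution) (e : Fin σ.n) : ℕ :=
  (Finset.univ.filter (fun f => (σ.op f).isRel ∧ σ.sTho f e)).card + 1

/-- FastTrack timestamp `Cft(e)(t)`: max of `Lft(f)` over events `f` of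
thread `t` with `f ≤HB e` (0 if there are none). -/
def Cft (σ : Execution) (e : Fin σ.n) (t : ℕ) : ℕ :=
  (Finset.univ.filter (fun f => σ.thread f = t ∧ σ.hb f e)).sup σ.Lft

/-- `T1 ⊑ T2`: pointwise comparison over the threads of `σ`. -/
def VCle (σ : Execution) (T1 T2 : ℕ → ℕ) : Prop :=
  ∀ t ∈ σ.threads, T1 t ≤ T2 t

/-- `(e1, e2)` is a conflicting pair (with `e1 <tr e2`). -/
def Conflicting (σ : Execution) (e1 e2 : Fin σ.n) : Prop :=
  e1 < e2 ∧ σ.thread e1 ≠ σ.thread e2 ∧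
    ∃ x, (σ.op e1).accesses x ∧ (σ.op e2).accesses x ∧
      (σ.op e1 = Op.write x ∨ σ.op e2 = Op.write x)

/-- `(e1, e2)` is an HB-race. -/
def HBRace (σ : Execution) (e1 e2 : Fin σ.n) : Prop :=
  σ.Conflicting e1 e2 ∧ ¬ σ.hb e1 e2

/-- `RelAfter S`: release events that are the first release after some
sampled event, in the same thread. -/
def RelAfter (σ : Execution) (S : Finset (Fin σ.n)) : Finset (Fin σ.n) :=
  Finset.univ.filter (fun f => (σ.op f).isRel ∧
    ∃ e ∈ S, σ.sTho e f ∧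
      ∀ g : Fin σ.n, (σ.op g).isRel → σ.sTho e g → ¬ σ.sTho g f)

/-- Sampling local time `Lsmp(e)`: 1 plus the number of events of `RelAfter S`
thread-order before `e`. -/
def Lsmp (σ : Execution) (S : Finset (Fin σ.n)) (e : Fin σ.n) : ℕ :=
  ((σ.RelAfter S).filter (fun f => σ.sTho f e)).card + 1

/-- Sampling timestamp `Csmp(e)(t)`: max of `Lsmp(f)` over sampled events `f`
of thread `t` with `f ≤HB e` (0 if there are none). -/
def Csmp (σ : Execution) (S : Finset (Fin σ.n)) (e : Fin σ.n) (t : ℕ) : ℕ :=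
  (S.filter (fun f => σ.thread f = t ∧ σ.hb f e)).sup (σ.Lsmp S)

/-- `Csmp⁻(f)`: the sampling timestamp of the immediate thread-order
predecessor of `f`, or the all-zero timestamp if `f` is the first event of
its thread. -/
def CsmpPrev (σ : Execution) (S : Finset (Fin σ.n)) (f : Fin σ.n) : ℕ → ℕ :=
  if h : ∃ f' : Fin σ.n, σ.sTho f' f ∧ ∀ g : Fin σ.n, σ.sTho f' g → ¬ σ.sTho g f
  then σ.Csmp S h.choose
  else fun _ => 0

/-- `VT(e)`: total number of component updates of the sampling timestamp along
the thread of `e`, up to and including `e`. -/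
def VT (σ : Execution) (S : Finset (Fin σ.n)) (e : Fin σ.n) : ℕ :=
  ∑ f ∈ Finset.univ.filter (fun f => σ.tho f e),
    ((σ.threads).filter (fun t => σ.Csmp S f t ≠ σ.CsmpPrev S f t)).card

/-- Freshness timestamp `U(e)(t)`: max of `VT(f)` over events `f` of thread
`t` with `f ≤HB e` (0 if there are none). -/
def Ufr (σ : Execution) (S : Finset (Fin σ.n)) (e : Fin σ.n) (t : ℕ) : ℕ :=
  (Finset.univ.filter (fun f => σ.thread f = t ∧ σ.hb f e)).sup (σ.VT S)

end Execution

/-- For every event `e`, the sum of the components of the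
sampling timestamp of `e` over the threads of `σ` is at most `|S|`. -/
theorem stmt12 (σ : Execution) (hwf : σ.LockWellFormed)
    (S : Finset (Fin σ.n)) (hS : ∀ e ∈ S, (σ.op e).isAccess) :
    ∀ e : Fin σ.n, (∑ t ∈ σ.threads, σ.Csmp S e t) ≤ S.card := by
  -- Key lemma: for f ∈ S, Lsmp f ≤ number of sampled events in the thread of f.
  have key : ∀ f ∈ S, σ.Lsmp S f ≤ (S.filter (fun e' => σ.thread e' = σ.thread f)).card := by
    intro f hf
    unfold Execution.Lsmp
    -- map each release g (in RelAfter S, before f) to its witness sampled event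
    have hcard : ((σ.RelAfter S).filter (fun g => σ.sTho g f)).card ≤
        (S.filter (fun e' => σ.thread e' = σ.thread f ∧ e' < f)).card := by
      apply Finset.card_le_card_of_injOn
        (fun g => if h : ∃ e ∈ S, σ.sTho e g ∧
            ∀ g' : Fin σ.n, (σ.op g').isRel → σ.sTho e g' → ¬ σ.sTho g' g
          then h.choose else g)
      · intro g hg
        simp only [Execution.RelAfter, Finset.mem_coe, Finset.mem_filter, Finset.mem_univ, true_and] at hg
        obtain ⟨⟨hrel, hwit⟩, hgf⟩ := hg
        beta_reduce
        rw [dif_pos hwit]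
        obtain ⟨heS, ⟨hlt, hth⟩, _⟩ := hwit.choose_spec
        simp only [Finset.mem_coe, Finset.mem_filter]
        exact ⟨heS, by rw [hth, hgf.2], lt_trans hlt hgf.1⟩
      · intro g1 hg1 g2 hg2 heq
        simp only [Execution.RelAfter, Finset.coe_filter, Set.mem_setOf_eq,
          Finset.mem_filter, Finset.mem_univ, true_and] at hg1 hg2
        obtain ⟨⟨hrel1, hwit1⟩, hg1f⟩ := hg1
        obtain ⟨⟨hrel2, hwit2⟩, hg2f⟩ := hg2
        simp only [dif_pos hwit1, dif_pos hwit2] at heq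
        obtain ⟨_, he1g1, hfirst1⟩ := hwit1.choose_spec
        obtain ⟨_, he2g2, hfirst2⟩ := hwit2.choose_spec
        by_contra hne
        rcases lt_or_gt_of_ne hne with h | h
        · exact hfirst2 g1 hrel1 (heq ▸ he1g1) ⟨h, he1g1.2.symm.trans (heq ▸ he2g2.2)⟩
        · exact hfirst1 g2 hrel2 (heq ▸ he2g2) ⟨h, he2g2.2.symm.trans (heq.symm ▸ he1g1.2)⟩
    have hsub : (S.filter (fun e' => σ.thread e' = σ.thread f ∧ e' < f)).card + 1 ≤
        (S.filter (fun e' => σ.thread e' = σ.thread f)).card := by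
      have : insert f (S.filter (fun e' => σ.thread e' = σ.thread f ∧ e' < f)) ⊆
          S.filter (fun e' => σ.thread e' = σ.thread f) := by
        intro x hx
        rcases Finset.mem_insert.mp hx with rfl | hx
        · exact Finset.mem_filter.mpr ⟨hf, rfl⟩
        · exact Finset.mem_filter.mpr ⟨(Finset.mem_filter.mp hx).1,
            (Finset.mem_filter.mp hx).2.1⟩
      calc (S.filter (fun e' => σ.thread e' = σ.thread f ∧ e' < f)).card + 1
          = (insert f (S.filter (fun e' => σ.thread e' = σ.thread f ∧ e' < f))).card := by
            rw [Finset.card_insert_of_notMem (by simp [lt_irrefl])]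
        _ ≤ _ := Finset.card_le_card this
    omega
  intro e
  calc ∑ t ∈ σ.threads, σ.Csmp S e t
      ≤ ∑ t ∈ σ.threads, (S.filter (fun e' => σ.thread e' = t)).card := by
        apply Finset.sum_le_sum
        intro t _
        apply Finset.sup_le
        intro f hf
        obtain ⟨hfS, hft, _⟩ := Finset.mem_filter.mp hf
        calc σ.Lsmp S f ≤ (S.filter (fun e' => σ.thread e' = σ.thread f)).card := key f hfS
          _ = (S.filter (fun e' => σ.thread e' = t)).card := by rw [hft]
    _ = S.card := by
        rw [← Finset.card_eq_sum_card_fiberwise]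
        intro x _
        exact Finset.mem_image.mpr ⟨x, Finset.mem_univ x, rfl⟩
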